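/- Let q be a real number with q > 0 and q ≠ 1 and let A_1, A_2 be complex numbers. The polynomial W(x,y) = x^4 + A_1 x^2 y^2 + A_2 y^4 satisfies W((x+(q-1)y)/√q, (x-y)/√q) = -W(x,y) identically if and only if q = 2, A_1 = -6, and A_2 = 1. In particular, φ_4(x,y) = x^4 - 6 x^2 y^2 + y^4 is the unique formal weight enumerator of degree 4 divisible by two, and it has q = 2. -/

import Mathlib

/-- Case n=2 of the even-degree search: `W(x,y) = x⁴ + A₁x²y² + A₂y⁴` satisfies
`W^{σ_q} = -W` if and only if `q = 2`, `A₁ = -6` and `A₂ = 1`; that is,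
`φ₄(x,y) = x⁴ - 6x²y² + y⁴` is the unique formal weight enumerator of degree 4
divisible by two, and it has `q = 2`. -/
theorem fwe_degree_four_unique (q : ℝ) (hq0 : 0 < q) (hq1 : q ≠ 1) (A1 A2 : ℂ) :
    (∀ x y : ℂ,
        ((x + ((q : ℂ) - 1) * y) / (Real.sqrt q : ℂ)) ^ 4 +
            A1 * ((x + ((q : ℂ) - 1) * y) / (Real.sqrt q : ℂ)) ^ 2 *
              ((x - y) / (Real.sqrt q : ℂ)) ^ 2 +
            A2 * ((x - y) / (Real.sqrt q : ℂ)) ^ 4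
          = -(x ^ 4 + A1 * x ^ 2 * y ^ 2 + A2 * y ^ 4))
      ↔ (q = 2 ∧ A1 = -6 ∧ A2 = 1) := by
  have hsq : ((Real.sqrt q : ℝ) : ℂ) ^ 2 = (q : ℂ) := by
    norm_cast
    exact Real.sq_sqrt hq0.le
  have hs0 : ((Real.sqrt q : ℝ) : ℂ) ≠ 0 :=
    Complex.ofReal_ne_zero.mpr (Real.sqrt_ne_zero'.mpr hq0)
  have hqC0 : (q : ℂ) ≠ 0 := by exact_mod_cast hq0.ne'
  constructor
  · intro h
    -- clear denominators
    have E : ∀ x y : ℂ,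
        (x + ((q : ℂ) - 1) * y) ^ 4 +
          A1 * (x + ((q : ℂ) - 1) * y) ^ 2 * (x - y) ^ 2 + A2 * (x - y) ^ 4
        = -(q : ℂ) ^ 2 * (x ^ 4 + A1 * x ^ 2 * y ^ 2 + A2 * y ^ 4) := by
      intro x y
      have hxy := h x y
      rw [← hsq] at hxy ⊢
      field_simp [hs0] at hxy
      apply mul_left_cancel₀ (pow_ne_zero 8 hs0)
      linear_combination ((Real.sqrt q : ℝ) : ℂ) ^ 8 * hxy
    have hc40 : 1 + A1 + A2 + (q : ℂ) ^ 2 = 0 := by linear_combination E 1 0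
    have hc31 : 4 * ((q : ℂ) - 1) + A1 * (2 * ((q : ℂ) - 1) - 2) - 4 * A2 = 0 := by
      linear_combination (2/3 : ℂ) * E 1 1 - (2/3 : ℂ) * E 1 (-1)
        - (1/12 : ℂ) * E 1 2 + (1/12 : ℂ) * E 1 (-2)
    have key : 2 * ((q : ℂ) - 2) * (q : ℂ) * (A1 - 2 * ((q : ℂ) - 1)) = 0 := by
      linear_combination (5/6 : ℂ) * E 1 1 - (5/6 : ℂ) * E 1 (-1)
        - (1/6 : ℂ) * E 1 2 + (1/6 : ℂ) * E 1 (-2)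
    have key' : ((q : ℂ) - 2) = 0 ∨ (A1 - 2 * ((q : ℂ) - 1)) = 0 := by
      rcases mul_eq_zero.mp key with h' | h'
      · rcases mul_eq_zero.mp h' with h'' | h''
        · left
          rcases mul_eq_zero.mp h'' with h3 | h3
          · norm_num at h3
          · exact h3
        · exact absurd h'' hqC0
      · right; exact h'
    rcases key' with hq2 | hA1
    · -- q = 2
      have hq2R : q = 2 := by
        have : (q : ℂ) = 2 := by linear_combination hq2
        exact_mod_cast this
      have hA2 : A2 = 1 := by
        linear_combination (-1/4 : ℂ) * hc31 + (1 + A1 / 2) * hq2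
      have hA1 : A1 = -6 := by
        linear_combination hc40 - ((q : ℂ) + 2) * hq2 - hA2
      exact ⟨hq2R, hA1, hA2⟩
    · -- contradiction: 2 q^2 = 0
      exfalso
      have h2q : 2 * (q : ℂ) ^ 2 = 0 := by
        linear_combination hc40 + (1/4 : ℂ) * hc31 - ((q : ℂ) / 2) * hA1
      have : (q : ℂ) = 0 := by
        rcases mul_eq_zero.mp h2q with h' | h'
        · norm_num at h'
        · exact pow_eq_zero_iff (by norm_num) |>.mp h'
      exact hqC0 this
  · rintro ⟨rfl, rfl, rfl⟩
    intro x y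
    have hsq2 : ((Real.sqrt 2 : ℝ) : ℂ) ^ 2 = 2 := by
      rw [hsq]; norm_num
    field_simp [hs0]
    push_cast
    linear_combination
      (x ^ 4 - 6 * x ^ 2 * y ^ 2 + y ^ 4) *
      (((Real.sqrt 2 : ℝ) : ℂ) ^ 2 + 2) * hsq2
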